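/- Assume moreover q ≠ 1. Then in the field F(u, x₁, …, x_N) of rational functions in N+1 variables the following partial fraction identity holds: Π_{j=1}^N ((1 − t·u·xⱼ)(1 − q·t⁻¹·u·xⱼ))/((1 − u·xⱼ)(1 − q·u·xⱼ)) = 1 + ((1 − t⁻¹)(q − t)/(q − 1)) · t^{1−N} · Σ_{i=1}^N ( (1/(1 − q·u·xᵢ)) · Π_{k≠i} ((t·xᵢ − x_k)(q·xᵢ − t·x_k))/((xᵢ − x_k)(q·xᵢ − x_k)) − (1/(1 − u·xᵢ)) · Π_{k≠i} ((xᵢ − t·x_k)(t·xᵢ − q·x_k))/((xᵢ − x_k)(xᵢ − q·x_k)) ). (This is the partial fraction decomposition of the Cartan current ψ⁺ used to compute the commutator of the fundamental Macdonald currents.) -/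

import Mathlib

open scoped BigOperators

noncomputable section

/-- The field `F(x₁,…,x_N)` of rational functions in `N` variables over `F`. -/
abbrev RatF (F : Type) [Field F] (N : ℕ) : Type :=
  FractionRing (MvPolynomial (Fin N) F)

/-- The variable `xᵢ` viewed inside the rational function field. -/
noncomputable def Xv (F : Type) [Field F] (N : ℕ) (i : Fin N) : RatF F N :=
  algebraMap (MvPolynomial (Fin N) F) (RatF F N) (MvPolynomial.X i)

noncomputable section PFaux
open Polynomial Finset
variable {L : Type} [Field L]

def plin (a : L) : L[X] := 1 - C a * X

@[simp] lemma plin_eval (a r : L) : (plin a).eval r = 1 - a * r := by simp [plin]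

lemma plin_degree {a : L} (h : a ≠ 0) : (plin a).degree = 1 := by
  unfold plin; rw [sub_eq_add_neg]; compute_degree!

lemma plin_lead {a : L} (h : a ≠ 0) : (plin a).leadingCoeff = -a := by
  have : (plin a : L[X]) = C (-a) * X + C 1 := by
    unfold plin; simp only [map_neg, map_one]; ring
  rw [this, leadingCoeff_linear (neg_ne_zero.mpr h)]

lemma plin_ne_zero (a : L) : plin a ≠ 0 := fun h => by
  have := congrArg (eval 0) h
  simp at this

lemma prod_plin_degree {ι : Type} (y : ι → L) (s : Finset ι) (h : ∀ j ∈ s, y j ≠ 0) :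
    (∏ j ∈ s, plin (y j)).degree = (s.card : WithBot ℕ) := by
  rw [degree_prod, Finset.sum_congr rfl (fun j hj => plin_degree (h j hj))]
  simp [Finset.sum_const]

variable {N : ℕ}

def Pp (q t : L) (x : Fin N → L) : L[X] :=
  ∏ j, (plin (t * x j) * plin (q * t⁻¹ * x j))

def Dp (q : L) (x : Fin N → L) : L[X] :=
  ∏ j, (plin (x j) * plin (q * x j))

def Dq (q : L) (x : Fin N → L) (i : Fin N) : L[X] :=
  (∏ j, plin (x j)) * ∏ k ∈ univ.erase i, plin (q * x k)

def D1 (q : L) (x : Fin N → L) (i : Fin N) : L[X] :=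
  (∏ k ∈ univ.erase i, plin (x k)) * ∏ j, plin (q * x j)

def Ep (q t : L) (x : Fin N → L) (A B : Fin N → L) : L[X] :=
  Pp q t x - Dp q x - ∑ i, (C (A i) * Dq q x i + C (B i) * D1 q x i)


@[simp] lemma Pp_eval (q t : L) (x : Fin N → L) (r : L) :
    (Pp q t x).eval r = ∏ j, ((1 - t * x j * r) * (1 - q * t⁻¹ * x j * r)) := by
  simp [Pp, eval_prod]

@[simp] lemma Dp_eval (q : L) (x : Fin N → L) (r : L) :
    (Dp q x).eval r = ∏ j, ((1 - x j * r) * (1 - q * x j * r)) := by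
  simp [Dp, eval_prod]

@[simp] lemma Dq_eval (q : L) (x : Fin N → L) (i : Fin N) (r : L) :
    (Dq q x i).eval r = (∏ j, (1 - x j * r)) * ∏ k ∈ univ.erase i, (1 - q * x k * r) := by
  simp [Dq, eval_prod]

@[simp] lemma D1_eval (q : L) (x : Fin N → L) (i : Fin N) (r : L) :
    (D1 q x i).eval r = (∏ k ∈ univ.erase i, (1 - x k * r)) * ∏ j, (1 - q * x j * r) := by
  simp [D1, eval_prod]

lemma Dq_mul (q : L) (x : Fin N → L) (i : Fin N) :
    Dq q x i * plin (q * x i) = Dp q x := by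
  rw [Dp, prod_mul_distrib, Dq, mul_assoc, Finset.prod_erase_mul _ _ (mem_univ i)]

lemma D1_mul (q : L) (x : Fin N → L) (i : Fin N) :
    D1 q x i * plin (x i) = Dp q x := by
  rw [Dp, prod_mul_distrib, D1, mul_right_comm, Finset.prod_erase_mul _ _ (mem_univ i)]

lemma Pp_sub_Dp_degree_lt (q t : L) (x : Fin N → L) (hq : q ≠ 0) (ht : t ≠ 0)
    (hx0 : ∀ i, x i ≠ 0) :
    (Pp q t x - Dp q x).degree < ((N + N : ℕ) : WithBot ℕ) := by
  have hPp : Pp q t x = (∏ j, plin (t * x j)) * ∏ j, plin (q * t⁻¹ * x j) := by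
    rw [Pp, prod_mul_distrib]
  have hDp : Dp q x = (∏ j, plin (x j)) * ∏ j, plin (q * x j) := by
    rw [Dp, prod_mul_distrib]
  have hdP : (Pp q t x).degree = ((N + N : ℕ) : WithBot ℕ) := by
    rw [hPp, degree_mul, prod_plin_degree _ _ (fun j _ => mul_ne_zero ht (hx0 j)),
      prod_plin_degree _ _ (fun j _ => mul_ne_zero (mul_ne_zero hq (inv_ne_zero ht)) (hx0 j))]
    simp
  have hdD : (Dp q x).degree = ((N + N : ℕ) : WithBot ℕ) := by
    rw [hDp, degree_mul, prod_plin_degree _ _ (fun j _ => hx0 j),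
      prod_plin_degree _ _ (fun j _ => mul_ne_zero hq (hx0 j))]
    simp
  have hP0 : Pp q t x ≠ 0 := by
    rw [Pp]
    exact prod_ne_zero_iff.mpr fun j _ => mul_ne_zero (plin_ne_zero _) (plin_ne_zero _)
  have hlead : (Pp q t x).leadingCoeff = (Dp q x).leadingCoeff := by
    rw [Pp, Dp, leadingCoeff_prod, leadingCoeff_prod]
    refine Finset.prod_congr rfl fun j _ => ?_
    rw [leadingCoeff_mul, leadingCoeff_mul, plin_lead (mul_ne_zero ht (hx0 j)),
      plin_lead (mul_ne_zero (mul_ne_zero hq (inv_ne_zero ht)) (hx0 j)),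
      plin_lead (hx0 j), plin_lead (mul_ne_zero hq (hx0 j))]
    field_simp
  have := degree_sub_lt (hdP.trans hdD.symm) hP0 hlead
  rwa [hdP] at this

lemma Ep_degree_lt (hN : 1 ≤ N) (q t : L) (x : Fin N → L) (A B : Fin N → L)
    (hq : q ≠ 0) (ht : t ≠ 0) (hx0 : ∀ i, x i ≠ 0) :
    (Ep q t x A B).degree < ((N + N : ℕ) : WithBot ℕ) := by
  have hDq : ∀ i, (Dq q x i).degree ≤ ((N + (N - 1) : ℕ) : WithBot ℕ) := by
    intro i
    rw [Dq, degree_mul, prod_plin_degree _ _ (fun j _ => hx0 j),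
      prod_plin_degree _ _ (fun k _ => mul_ne_zero hq (hx0 k)),
      card_erase_of_mem (mem_univ i), card_univ, Fintype.card_fin]
    norm_cast
  have hD1 : ∀ i, (D1 q x i).degree ≤ ((N + (N - 1) : ℕ) : WithBot ℕ) := by
    intro i
    rw [D1, degree_mul, prod_plin_degree _ _ (fun j _ => hx0 j),
      prod_plin_degree _ _ (fun k _ => mul_ne_zero hq (hx0 k)),
      card_erase_of_mem (mem_univ i), card_univ, Fintype.card_fin]
    norm_cast
    omega
  have hsum : (∑ i, (C (A i) * Dq q x i + C (B i) * D1 q x i)).degree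
      ≤ ((N + (N - 1) : ℕ) : WithBot ℕ) := by
    refine (degree_sum_le _ _).trans (Finset.sup_le fun i _ => ?_)
    refine (degree_add_le _ _).trans (max_le ?_ ?_)
    · exact (degree_mul_le _ _).trans (by
        calc (C (A i)).degree + (Dq q x i).degree ≤ 0 + ((N + (N - 1) : ℕ) : WithBot ℕ) :=
          add_le_add degree_C_le (hDq i)
        _ = _ := zero_add _)
    · exact (degree_mul_le _ _).trans (by
        calc (C (B i)).degree + (D1 q x i).degree ≤ 0 + ((N + (N - 1) : ℕ) : WithBot ℕ) :=
          add_le_add degree_C_le (hD1 i)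
        _ = _ := zero_add _)
  have h2 : ((N + (N - 1) : ℕ) : WithBot ℕ) < ((N + N : ℕ) : WithBot ℕ) := by
    rw [Nat.cast_lt]; omega
  rw [Ep]
  exact (degree_sub_le _ _).trans_lt
    (max_lt (Pp_sub_Dp_degree_lt q t x hq ht hx0) (hsum.trans_lt h2))

lemma Ep_eq_zero (hN : 1 ≤ N) (q t : L) (x : Fin N → L) (A B : Fin N → L)
    (hq : q ≠ 0) (ht : t ≠ 0) (hq1 : q ≠ 1) (hx0 : ∀ i, x i ≠ 0)
    (hxx : ∀ i k, i ≠ k → x i ≠ x k) (hqx : ∀ i k, q * x i ≠ x k)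
    (hr1 : ∀ m, (Ep q t x A B).eval (x m)⁻¹ = 0)
    (hr2 : ∀ m, (Ep q t x A B).eval (q * x m)⁻¹ = 0) :
    Ep q t x A B = 0 := by
  by_cases hE : Ep q t x A B = 0
  · exact hE
  have hdeg : (Ep q t x A B).natDegree < N + N := by
    have := Ep_degree_lt hN q t x A B hq ht hx0
    rwa [degree_eq_natDegree hE, Nat.cast_lt] at this
  set f : Fin N ⊕ Fin N → L := Sum.elim (fun m => (x m)⁻¹) (fun m => (q * x m)⁻¹) with hf
  have hinj : Function.Injective f := by
    rintro (a | a) (b | b) h <;> simp only [hf, Sum.elim_inl, Sum.elim_inr] at h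
    · have := inv_injective h
      by_contra hab
      exact hxx a b (by simpa using hab) this
    · exact absurd (inv_injective h) (fun hh => (hqx b a) hh.symm)
    · exact absurd (inv_injective h) (hqx a b)
    · have := inv_injective h
      have := mul_left_cancel₀ hq this
      by_contra hab
      exact hxx a b (by simpa using hab) this
  refine eq_zero_of_natDegree_lt_card_of_eval_eq_zero _ hinj ?_ ?_
  · rintro (m | m)
    · exact hr1 m
    · exact hr2 m
  · simpa using hdeg

lemma zp_eq (t : L) (hN : 1 ≤ N) (m : Fin N) :
    t ^ ((1:ℤ) - (N:ℤ)) = ∏ _k ∈ univ.erase m, t⁻¹ := by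
  rw [prod_const, card_erase_of_mem (mem_univ m), card_univ, Fintype.card_fin, inv_pow,
    show ((1:ℤ) - (N:ℤ)) = -((N - 1 : ℕ) : ℤ) by rw [Nat.cast_sub hN]; push_cast; ring,
    zpow_neg, zpow_natCast]

lemma key1 (hN : 1 ≤ N) (q t : L) (x : Fin N → L) (m : Fin N)
    (hq : q ≠ 0) (ht : t ≠ 0) (hq1 : q ≠ 1) (hx0 : ∀ i, x i ≠ 0)
    (hxx : ∀ i k, i ≠ k → x i ≠ x k) (hqx : ∀ i k, q * x i ≠ x k) :
    ∏ j, ((1 - t * x j * (x m)⁻¹) * (1 - q * t⁻¹ * x j * (x m)⁻¹))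
      = (-(((1 - t⁻¹) * (q - t) / (q - 1) * t ^ ((1:ℤ) - (N:ℤ))) *
          ∏ k ∈ univ.erase m,
            ((x m - t * x k) * (t * x m - q * x k)) / ((x m - x k) * (x m - q * x k)))) *
        ((∏ k ∈ univ.erase m, (1 - x k * (x m)⁻¹)) * ∏ j, (1 - q * x j * (x m)⁻¹)) := by
  have hxm := hx0 m
  have hq1' : q - 1 ≠ 0 := sub_ne_zero.mpr hq1
  have hscal : (1 - t * x m * (x m)⁻¹) * (1 - q * t⁻¹ * x m * (x m)⁻¹)
      = -((1 - t⁻¹) * (q - t) / (q - 1)) * (1 - q * x m * (x m)⁻¹) := by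
    field_simp
    ring
  have hfac : ∀ k ∈ univ.erase m,
      (1 - t * x k * (x m)⁻¹) * (1 - q * t⁻¹ * x k * (x m)⁻¹)
      = (t⁻¹ * (((x m - t * x k) * (t * x m - q * x k)) / ((x m - x k) * (x m - q * x k))))
        * ((1 - x k * (x m)⁻¹) * (1 - q * x k * (x m)⁻¹)) := by
    intro k hk
    have hkm : k ≠ m := (mem_erase.mp hk).1
    have h1 : x m - x k ≠ 0 := sub_ne_zero.mpr (hxx m k (Ne.symm hkm))
    have h2 : x m - q * x k ≠ 0 := sub_ne_zero.mpr (Ne.symm (hqx k m))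
    have h2' : x m - x k * q ≠ 0 := by rwa [mul_comm] at h2
    field_simp
  rw [← Finset.mul_prod_erase _ _ (mem_univ m),
    ← Finset.mul_prod_erase _ (fun j => 1 - q * x j * (x m)⁻¹) (mem_univ m),
    Finset.prod_congr rfl hfac, hscal, zp_eq t hN m]
  rw [prod_mul_distrib, prod_mul_distrib, prod_mul_distrib]
  ring

lemma key2 (hN : 1 ≤ N) (q t : L) (x : Fin N → L) (m : Fin N)
    (hq : q ≠ 0) (ht : t ≠ 0) (hq1 : q ≠ 1) (hx0 : ∀ i, x i ≠ 0)
    (hxx : ∀ i k, i ≠ k → x i ≠ x k) (hqx : ∀ i k, q * x i ≠ x k) :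
    ∏ j, ((1 - t * x j * (q * x m)⁻¹) * (1 - q * t⁻¹ * x j * (q * x m)⁻¹))
      = ((((1 - t⁻¹) * (q - t) / (q - 1) * t ^ ((1:ℤ) - (N:ℤ))) *
          ∏ k ∈ univ.erase m,
            ((t * x m - x k) * (q * x m - t * x k)) / ((x m - x k) * (q * x m - x k)))) *
        ((∏ j, (1 - x j * (q * x m)⁻¹)) * ∏ k ∈ univ.erase m, (1 - q * x k * (q * x m)⁻¹)) := by
  have hxm := hx0 m
  have hq1' : q - 1 ≠ 0 := sub_ne_zero.mpr hq1
  have hqxm : q * x m ≠ 0 := mul_ne_zero hq hxm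
  have hscal : (1 - t * x m * (q * x m)⁻¹) * (1 - q * t⁻¹ * x m * (q * x m)⁻¹)
      = ((1 - t⁻¹) * (q - t) / (q - 1)) * (1 - x m * (q * x m)⁻¹) := by
    field_simp
  have hfac : ∀ k ∈ univ.erase m,
      (1 - t * x k * (q * x m)⁻¹) * (1 - q * t⁻¹ * x k * (q * x m)⁻¹)
      = (t⁻¹ * (((t * x m - x k) * (q * x m - t * x k)) / ((x m - x k) * (q * x m - x k))))
        * ((1 - x k * (q * x m)⁻¹) * (1 - q * x k * (q * x m)⁻¹)) := by
    intro k hk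
    have hkm : k ≠ m := (mem_erase.mp hk).1
    have h1 : x m - x k ≠ 0 := sub_ne_zero.mpr (hxx m k (Ne.symm hkm))
    have h2 : q * x m - x k ≠ 0 := sub_ne_zero.mpr (hqx m k)
    field_simp
  rw [← Finset.mul_prod_erase _ _ (mem_univ m),
    ← Finset.mul_prod_erase _ (fun j => 1 - x j * (q * x m)⁻¹) (mem_univ m),
    Finset.prod_congr rfl hfac, hscal, zp_eq t hN m]
  rw [prod_mul_distrib, prod_mul_distrib, prod_mul_distrib]
  ring


lemma Ep_eval_inv_x (q t : L) (x : Fin N → L) (A B : Fin N → L) (m : Fin N)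
    (hx0 : ∀ i, x i ≠ 0) :
    (Ep q t x A B).eval (x m)⁻¹
      = ∏ j, ((1 - t * x j * (x m)⁻¹) * (1 - q * t⁻¹ * x j * (x m)⁻¹))
        - B m * ((∏ k ∈ univ.erase m, (1 - x k * (x m)⁻¹)) * ∏ j, (1 - q * x j * (x m)⁻¹)) := by
  classical
  have h0 : (1 : L) - x m * (x m)⁻¹ = 0 := by
    rw [mul_inv_cancel₀ (hx0 m), sub_self]
  have hPz : (∏ j, (1 - x j * (x m)⁻¹)) = 0 := Finset.prod_eq_zero (mem_univ m) h0
  rw [Ep]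
  simp only [eval_sub, eval_finset_sum, eval_add, eval_mul, eval_C,
    Pp_eval, Dp_eval, Dq_eval, D1_eval]
  rw [Finset.prod_eq_zero (f := fun j => (1 - x j * (x m)⁻¹) * (1 - q * x j * (x m)⁻¹))
      (mem_univ m) (by simp only [h0, zero_mul])]
  rw [Finset.sum_eq_single m
    (fun i _ hne => by
      rw [hPz, Finset.prod_eq_zero (f := fun k => 1 - x k * (x m)⁻¹)
        (Finset.mem_erase_of_ne_of_mem (Ne.symm hne) (mem_univ m)) h0]
      ring)
    (fun h => absurd (mem_univ m) h)]
  rw [hPz]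
  ring

lemma Ep_eval_inv_qx (q t : L) (x : Fin N → L) (A B : Fin N → L) (m : Fin N)
    (hq : q ≠ 0) (hx0 : ∀ i, x i ≠ 0) :
    (Ep q t x A B).eval (q * x m)⁻¹
      = ∏ j, ((1 - t * x j * (q * x m)⁻¹) * (1 - q * t⁻¹ * x j * (q * x m)⁻¹))
        - A m * ((∏ j, (1 - x j * (q * x m)⁻¹)) *
            ∏ k ∈ univ.erase m, (1 - q * x k * (q * x m)⁻¹)) := by
  classical
  have h0 : (1 : L) - q * x m * (q * x m)⁻¹ = 0 := by
    rw [mul_inv_cancel₀ (mul_ne_zero hq (hx0 m)), sub_self]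
  have hQz : (∏ j, (1 - q * x j * (q * x m)⁻¹)) = 0 := Finset.prod_eq_zero (mem_univ m) h0
  rw [Ep]
  simp only [eval_sub, eval_finset_sum, eval_add, eval_mul, eval_C,
    Pp_eval, Dp_eval, Dq_eval, D1_eval]
  rw [Finset.prod_eq_zero (f := fun j => (1 - x j * (q * x m)⁻¹) * (1 - q * x j * (q * x m)⁻¹))
      (mem_univ m) (by simp only [h0, mul_zero])]
  rw [Finset.sum_eq_single m
    (fun i _ hne => by
      rw [hQz, Finset.prod_eq_zero (f := fun k => 1 - q * x k * (q * x m)⁻¹)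
        (Finset.mem_erase_of_ne_of_mem (Ne.symm hne) (mem_univ m)) h0]
      ring)
    (fun h => absurd (mem_univ m) h)]
  rw [hQz]
  ring

theorem pf_main (hN : 1 ≤ N) (q t u : L) (x : Fin N → L)
    (hq : q ≠ 0) (ht : t ≠ 0) (hq1 : q ≠ 1)
    (hx0 : ∀ i, x i ≠ 0)
    (hxx : ∀ i k, i ≠ k → x i ≠ x k)
    (hqxx : ∀ i k, i ≠ k → q * x i ≠ x k)
    (hu1 : ∀ j, 1 - u * x j ≠ 0)
    (hu2 : ∀ j, 1 - q * (u * x j) ≠ 0) :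
    (∏ j, ((1 - t * (u * x j)) * (1 - q * t⁻¹ * (u * x j))) /
        ((1 - u * x j) * (1 - q * (u * x j))))
    = 1 + ((1 - t⁻¹) * (q - t) / (q - 1) * t ^ ((1:ℤ) - (N:ℤ))) *
        ∑ i, ((1 - q * (u * x i))⁻¹ * ∏ k ∈ univ.erase i,
            ((t * x i - x k) * (q * x i - t * x k)) / ((x i - x k) * (q * x i - x k))
          - (1 - u * x i)⁻¹ * ∏ k ∈ univ.erase i,
            ((x i - t * x k) * (t * x i - q * x k)) / ((x i - x k) * (x i - q * x k))) := by
  classical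
  have hqx : ∀ i k, q * x i ≠ x k := by
    intro i k
    rcases eq_or_ne i k with rfl | h
    · exact fun hh => hq1 (mul_right_cancel₀ (hx0 i) (by rw [hh, one_mul]))
    · exact hqxx i k h
  set A : Fin N → L := fun i => ((1 - t⁻¹) * (q - t) / (q - 1) * t ^ ((1:ℤ) - (N:ℤ))) *
      ∏ k ∈ univ.erase i,
        ((t * x i - x k) * (q * x i - t * x k)) / ((x i - x k) * (q * x i - x k)) with hA
  set B : Fin N → L := fun i => -(((1 - t⁻¹) * (q - t) / (q - 1) * t ^ ((1:ℤ) - (N:ℤ))) *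
      ∏ k ∈ univ.erase i,
        ((x i - t * x k) * (t * x i - q * x k)) / ((x i - x k) * (x i - q * x k))) with hB
  have hE0 : Ep q t x A B = 0 := by
    refine Ep_eq_zero hN q t x A B hq ht hq1 hx0 hxx hqx ?_ ?_
    · intro m
      rw [Ep_eval_inv_x q t x A B m hx0]
      simp only [hB]
      rw [key1 hN q t x m hq ht hq1 hx0 hxx hqx]
      ring
    · intro m
      rw [Ep_eval_inv_qx q t x A B m hq hx0]
      simp only [hA]
      rw [key2 hN q t x m hq ht hq1 hx0 hxx hqx]
      ring
  have hu1' : ∀ j, (1:L) - x j * u ≠ 0 := fun j => by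
    rw [show (1:L) - x j * u = 1 - u * x j by ring]; exact hu1 j
  have hu2' : ∀ j, (1:L) - q * x j * u ≠ 0 := fun j => by
    rw [show (1:L) - q * x j * u = 1 - q * (u * x j) by ring]; exact hu2 j
  have hDU : (Dp q x).eval u ≠ 0 := by
    rw [Dp_eval]
    exact prod_ne_zero_iff.mpr fun j _ => mul_ne_zero (hu1' j) (hu2' j)
  have heval : (Pp q t x).eval u - (Dp q x).eval u
      - ∑ i, (A i * (Dq q x i).eval u + B i * (D1 q x i).eval u) = 0 := by
    have := congrArg (eval u) hE0
    rw [Ep] at this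
    simpa only [eval_sub, eval_finset_sum, eval_add, eval_mul, eval_C, eval_zero] using this
  have hP : (Pp q t x).eval u
      = (Dp q x).eval u + ∑ i, (A i * (Dq q x i).eval u + B i * (D1 q x i).eval u) := by
    linear_combination heval
  have hL : (∏ j, ((1 - t * (u * x j)) * (1 - q * t⁻¹ * (u * x j))) /
        ((1 - u * x j) * (1 - q * (u * x j))))
      = (Pp q t x).eval u / (Dp q x).eval u := by
    rw [Pp_eval, Dp_eval, ← prod_div_distrib]
    exact Finset.prod_congr rfl fun j _ => by ring
  rw [hL, div_eq_iff hDU, hP, add_mul, one_mul]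
  congr 1
  rw [show (((1 - t⁻¹) * (q - t) / (q - 1) * t ^ ((1:ℤ) - (N:ℤ))) *
      ∑ i, ((1 - q * (u * x i))⁻¹ * ∏ k ∈ univ.erase i,
            ((t * x i - x k) * (q * x i - t * x k)) / ((x i - x k) * (q * x i - x k))
          - (1 - u * x i)⁻¹ * ∏ k ∈ univ.erase i,
            ((x i - t * x k) * (t * x i - q * x k)) / ((x i - x k) * (x i - q * x k))))
        * (Dp q x).eval u
      = ∑ i, (((1 - t⁻¹) * (q - t) / (q - 1) * t ^ ((1:ℤ) - (N:ℤ))) *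
          ((1 - q * (u * x i))⁻¹ * ∏ k ∈ univ.erase i,
            ((t * x i - x k) * (q * x i - t * x k)) / ((x i - x k) * (q * x i - x k))
          - (1 - u * x i)⁻¹ * ∏ k ∈ univ.erase i,
            ((x i - t * x k) * (t * x i - q * x k)) / ((x i - x k) * (x i - q * x k)))
          * (Dp q x).eval u) by rw [mul_sum, sum_mul]]
  refine Finset.sum_congr rfl fun i _ => ?_
  have hDq : (Dq q x i).eval u * (1 - q * x i * u) = (Dp q x).eval u := by
    have := congrArg (eval u) (Dq_mul q x i)
    simpa only [eval_mul, plin_eval] using this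
  have hD1 : (D1 q x i).eval u * (1 - x i * u) = (Dp q x).eval u := by
    have := congrArg (eval u) (D1_mul q x i)
    simpa only [eval_mul, plin_eval] using this
  have hDqv : (Dq q x i).eval u = (Dp q x).eval u / (1 - q * x i * u) :=
    (eq_div_iff (hu2' i)).mpr hDq
  have hD1v : (D1 q x i).eval u = (Dp q x).eval u / (1 - x i * u) :=
    (eq_div_iff (hu1' i)).mpr hD1
  rw [hA, hB, hDqv, hD1v,
    show (1:L) - q * x i * u = 1 - q * (u * x i) by ring,
    show (1:L) - x i * u = 1 - u * x i by ring,
    div_eq_mul_inv, div_eq_mul_inv]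
  ring
end PFaux

section Glue
open Polynomial Finset

variable {F : Type} [Field F] {M : ℕ}

lemma alg_ne_zero (p : MvPolynomial (Fin M) F) (v : Fin M → F)
    (h : MvPolynomial.eval v p ≠ 0) :
    algebraMap (MvPolynomial (Fin M) F) (RatF F M) p ≠ 0 := by
  intro hz
  apply h
  rw [show p = 0 from IsFractionRing.injective (MvPolynomial (Fin M) F) (RatF F M)
    (by rw [hz, map_zero]), map_zero]

end Glue

set_option maxHeartbeats 2000000 in
/-- the partial fraction decomposition of the Cartan current `ψ⁺` in
`F(u,x₁,…,x_N)` (here `u = X 0` and `xᵢ = X i.succ`):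
`Πⱼ ((1−t u xⱼ)(1−q t⁻¹ u xⱼ))/((1−u xⱼ)(1−q u xⱼ))
 = 1 + ((1−t⁻¹)(q−t)/(q−1))·t^{1−N}·Σᵢ( (1/(1−q u xᵢ))·Πₖ≠ᵢ((t xᵢ−xₖ)(q xᵢ−t xₖ))/((xᵢ−xₖ)(q xᵢ−xₖ))
   − (1/(1−u xᵢ))·Πₖ≠ᵢ((xᵢ−t xₖ)(t xᵢ−q xₖ))/((xᵢ−xₖ)(xᵢ−q xₖ)) )`. -/
theorem statement4 (F : Type) [Field F] [CharZero F] (q t : F) (hq : q ≠ 0) (ht : t ≠ 0)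
    (hq1 : q ≠ 1) (N : ℕ) (hN : 1 ≤ N) :
    (∏ j : Fin N,
        ((1 - t • (Xv F (N + 1) 0 * Xv F (N + 1) j.succ)) *
            (1 - (q * t⁻¹) • (Xv F (N + 1) 0 * Xv F (N + 1) j.succ))) /
          ((1 - Xv F (N + 1) 0 * Xv F (N + 1) j.succ) *
            (1 - q • (Xv F (N + 1) 0 * Xv F (N + 1) j.succ))))
      = 1 + ((1 - t⁻¹) * (q - t) / (q - 1) * t ^ ((1 : ℤ) - (N : ℤ))) •
          ∑ i : Fin N,
            ((1 - q • (Xv F (N + 1) 0 * Xv F (N + 1) i.succ))⁻¹ *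
                ∏ k ∈ Finset.univ.erase i,
                  ((t • Xv F (N + 1) i.succ - Xv F (N + 1) k.succ) *
                      (q • Xv F (N + 1) i.succ - t • Xv F (N + 1) k.succ)) /
                    ((Xv F (N + 1) i.succ - Xv F (N + 1) k.succ) *
                      (q • Xv F (N + 1) i.succ - Xv F (N + 1) k.succ))
              - (1 - Xv F (N + 1) 0 * Xv F (N + 1) i.succ)⁻¹ *
                ∏ k ∈ Finset.univ.erase i,
                  ((Xv F (N + 1) i.succ - t • Xv F (N + 1) k.succ) *
                      (t • Xv F (N + 1) i.succ - q • Xv F (N + 1) k.succ)) /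
                    ((Xv F (N + 1) i.succ - Xv F (N + 1) k.succ) *
                      (Xv F (N + 1) i.succ - q • Xv F (N + 1) k.succ))) := by
  classical
  have hφ : Function.Injective (algebraMap F (RatF F (N+1))) := RingHom.injective _
  have hq' : algebraMap F (RatF F (N+1)) q ≠ 0 := (map_ne_zero_iff _ hφ).mpr hq
  have ht' : algebraMap F (RatF F (N+1)) t ≠ 0 := (map_ne_zero_iff _ hφ).mpr ht
  have hq1' : algebraMap F (RatF F (N+1)) q ≠ 1 := by
    rw [Ne, ← map_one (algebraMap F (RatF F (N+1)))]
    exact fun h => hq1 (hφ h)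
  have hx0 : ∀ i : Fin N, Xv F (N+1) i.succ ≠ 0 := fun i =>
    alg_ne_zero _ (Pi.single i.succ 1) (by simp)
  have hxx : ∀ i k : Fin N, i ≠ k → Xv F (N+1) i.succ ≠ Xv F (N+1) k.succ := by
    intro i k h
    have h' : k.succ ≠ i.succ := fun hh => h (Fin.succ_injective _ hh).symm
    apply sub_ne_zero.mp
    rw [Xv, Xv, ← map_sub]
    apply alg_ne_zero _ (Pi.single i.succ 1)
    simp [Pi.single_apply, h']
  have hqxx : ∀ i k : Fin N, i ≠ k →
      algebraMap F (RatF F (N+1)) q * Xv F (N+1) i.succ ≠ Xv F (N+1) k.succ := by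
    intro i k h
    have h' : k.succ ≠ i.succ := fun hh => h (Fin.succ_injective _ hh).symm
    apply sub_ne_zero.mp
    rw [Xv, Xv, IsScalarTower.algebraMap_apply F (MvPolynomial (Fin (N+1)) F) (RatF F (N+1)),
      MvPolynomial.algebraMap_eq, ← map_mul, ← map_sub]
    apply alg_ne_zero _ (Pi.single i.succ 1)
    simp [Pi.single_apply, h', hq]
  have hu1 : ∀ j : Fin N, (1 : RatF F (N+1)) - Xv F (N+1) 0 * Xv F (N+1) j.succ ≠ 0 := by
    intro j
    rw [Xv, Xv, ← map_mul, ← map_one (algebraMap (MvPolynomial (Fin (N+1)) F) (RatF F (N+1))),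
      ← map_sub]
    apply alg_ne_zero _ 0
    simp
  have hu2 : ∀ j : Fin N, (1 : RatF F (N+1)) -
      algebraMap F (RatF F (N+1)) q * (Xv F (N+1) 0 * Xv F (N+1) j.succ) ≠ 0 := by
    intro j
    rw [Xv, Xv, IsScalarTower.algebraMap_apply F (MvPolynomial (Fin (N+1)) F) (RatF F (N+1)),
      MvPolynomial.algebraMap_eq, ← map_mul, ← map_mul,
      ← map_one (algebraMap (MvPolynomial (Fin (N+1)) F) (RatF F (N+1))), ← map_sub]
    apply alg_ne_zero _ 0
    simp
  have key := pf_main hN (algebraMap F (RatF F (N+1)) q) (algebraMap F (RatF F (N+1)) t)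
    (Xv F (N+1) 0) (fun i => Xv F (N+1) i.succ) hq' ht' hq1' hx0 hxx hqxx hu1 hu2
  simp only [Algebra.smul_def, map_mul, map_div₀, map_sub, map_one, map_inv₀, map_zpow₀]
  exact key

end
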